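/- Let Γ = (V,E) be a vertex-transitive finite loopless digraph of out-degree r ≥ 1 and girth g. Then g ≤ ⌈(|V|−1)/r⌉ + 1. -/

import Mathlib

/-- Image of a point under a relation. -/
def relImage {V : Type*} (E : V → V → Prop) (a : V) : Set V := {x | E a x}

/-- Image of a set under a relation. -/
def relSetImage {V : Type*} (E : V → V → Prop) (A : Set V) : Set V :=
  {y | ∃ x ∈ A, E x y}

/-- j-fold relational composition, with `relPow E 0` the identity relation. -/
def relPow {V : Type*} (E : V → V → Prop) : ℕ → V → V → Prop
  | 0 => fun x y => x = y
  | (n+1) => fun x y => ∃ z, relPow E n x z ∧ E z y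

/-- `f` is an automorphism of the relation `E`. -/
def IsRelAuto {V : Type*} (E : V → V → Prop) (f : V ≃ V) : Prop :=
  ∀ x y, E x y ↔ E (f x) (f y)

/-- The relation `E` is point-symmetric (vertex-transitive). -/
def PointSym {V : Type*} (E : V → V → Prop) : Prop :=
  ∀ x y : V, ∃ f : V ≃ V, IsRelAuto E f ∧ f x = y

/-- Boundary of a set: `∂(X) = Γ(X) \ X`. -/
def relBd {V : Type*} (E : V → V → Prop) (X : Set V) : Set V :=
  relSetImage E X \ X

/-- Admissible sets for the definition of connectivity. -/
def relAdm {V : Type*} (E : V → V → Prop) (X : Set V) : Prop :=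
  X.Finite ∧ X.Nonempty ∧ relSetImage E X ≠ Set.univ

/-- Connectivity: minimum boundary size over admissible sets. -/
noncomputable def relKappa {V : Type*} (E : V → V → Prop) : ℕ :=
  sInf {n | ∃ X : Set V, relAdm E X ∧ (relBd E X).ncard = n}

/-- A fragment achieves the connectivity. -/
def IsFragment {V : Type*} (E : V → V → Prop) (X : Set V) : Prop :=
  relAdm E X ∧ (relBd E X).ncard = relKappa E

/-- Cardinality of an atom. -/
noncomputable def atomCard {V : Type*} (E : V → V → Prop) : ℕ :=
  sInf {n | ∃ X : Set V, IsFragment E X ∧ X.ncard = n}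

/-- An atom: a fragment of minimum cardinality. -/
def IsRelAtom {V : Type*} (E : V → V → Prop) (A : Set V) : Prop :=
  IsFragment E A ∧ A.ncard = atomCard E

/-- `E` has a directed cycle of length `k`: `k` distinct vertices cyclically joined. -/
def HasCycle {V : Type*} (E : V → V → Prop) (k : ℕ) : Prop :=
  ∃ (a : V) (l : List V), (a :: l).length = k ∧ (a :: l).Nodup ∧
    List.Chain E a (l ++ [a])

/- ===== my aux ===== -/
section Aux
variable {V : Type*}

/-- reversed relation -/
def rFlip (E : V → V → Prop) : V → V → Prop := fun x y => E y x

lemma rFlip_rFlip (E : V → V → Prop) : rFlip (rFlip E) = E := rfl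

/-- closed walk of positive length yields a cycle of length at most `l.length + 1`. -/
lemma cycle_of_closed_walk (E : V → V → Prop) :
    ∀ (n : ℕ) (l : List V) (a : V), l.length ≤ n → List.Chain E a (l ++ [a]) →
      ∃ k, HasCycle E k ∧ k ≤ l.length + 1 := by
  classical
  intro n
  induction n with
  | zero =>
    intro l a hl hc
    -- l = []
    have : l = [] := List.length_eq_zero_iff.mp (Nat.le_zero.mp hl)
    subst this
    exact ⟨1, ⟨a, [], rfl, by simp, hc⟩, by simp⟩
  | succ n ih =>
    intro l a hl hc
    by_cases hmem : a ∈ l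
    · obtain ⟨s, t, rfl⟩ := List.append_of_mem hmem
      -- chain over (s ++ a :: t) ++ [a] ; extract prefix closed walk a :: s ++ [a]
      have hc' : List.Chain' E ((a :: s ++ [a]) ++ (t ++ [a])) := by
        have : (a :: s ++ [a]) ++ (t ++ [a]) = a :: ((s ++ a :: t) ++ [a]) := by simp
        rw [this]; exact hc
      have h1 : List.Chain' E (a :: s ++ [a]) := (List.isChain_append.mp hc').1
      have h1' : List.Chain E a (s ++ [a]) := h1
      obtain ⟨k, hk, hkle⟩ := ih s a (by simp at hl ⊢; omega) h1'
      exact ⟨k, hk, by simp at hl hkle ⊢; omega⟩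
    · by_cases hnd : l.Nodup
      · refine ⟨l.length + 1, ⟨a, l, rfl, by simp [hnd, hmem], hc⟩, le_refl _⟩
      · -- find a duplicate in l
        rw [List.nodup_iff_sublist] at hnd
        push_neg at hnd
        obtain ⟨x, hx⟩ := hnd
        -- [x, x] <+ l : split l = s ++ x :: t with x ∈ t
        have hsplit : ∃ s t1 t2, l = s ++ x :: t1 ++ x :: t2 := by
          obtain ⟨s, t, hst⟩ := List.append_of_mem (hx.subset (by simp : x ∈ [x,x]))
          have hcnt : 2 ≤ List.count x l := by
            have := hx.count_le x
            simpa using this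
          by_cases hxs : x ∈ s
          · obtain ⟨s1, s2, h2⟩ := List.append_of_mem hxs
            exact ⟨s1, s2, t, by simp [hst, h2]⟩
          · have hcs : List.count x s = 0 := List.count_eq_zero.mpr hxs
            have hxt : x ∈ t := by
              rw [hst, List.count_append, hcs, List.count_cons_self] at hcnt
              have : 1 ≤ List.count x t := by omega
              exact List.count_pos_iff.mp this
            obtain ⟨t1, t2, h2⟩ := List.append_of_mem hxt
            exact ⟨s, t1, t2, by simp [hst, h2]⟩
        obtain ⟨s, t1, t2, hst⟩ := hsplit
        subst hst
        -- closed walk x :: t1 ++ [x]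
        have hc' : List.Chain' E ((a :: s) ++ ((x :: t1 ++ [x]) ++ (t2 ++ [a]))) := by
          have heq : (a :: s) ++ ((x :: t1 ++ [x]) ++ (t2 ++ [a]))
              = a :: ((s ++ x :: t1 ++ x :: t2) ++ [a]) := by simp
          rw [heq]; exact hc
        have h2 : List.Chain' E (x :: t1 ++ [x]) :=
          (List.isChain_append.mp (List.isChain_append.mp hc').2.1).1
        have h2' : List.Chain E x (t1 ++ [x]) := h2
        obtain ⟨k, hk, hkle⟩ := ih t1 x (by simp at hl ⊢; omega) h2'
        refine ⟨k, hk, by simp at hl hkle ⊢; omega⟩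

end Aux

section Aux2
variable {V : Type*} {E : V → V → Prop}

lemma hasCycle_two_le (hloop : ∀ x, ¬ E x x) {k : ℕ} (h : HasCycle E k) : 2 ≤ k := by
  obtain ⟨a, l, hlen, hnd, hc⟩ := h
  match l, hlen with
  | [], h => exact absurd (List.rel_of_isChain_cons_cons hc) (hloop a)
  | (b :: t), h => simp at h; omega

lemma hasCycle_rFlip {k : ℕ} (h : HasCycle E k) : HasCycle (rFlip E) k := by
  obtain ⟨a, l, hlen, hnd, hc⟩ := h
  refine ⟨a, l.reverse, by simpa using hlen, by
    have : (a :: l.reverse).Perm (a :: l) := List.Perm.cons a (List.reverse_perm l)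
    exact this.nodup_iff.mpr hnd, ?_⟩
  have hc' : List.Chain' E (a :: l ++ [a]) := hc
  have := (List.isChain_reverse (R := rFlip E)).mpr hc'
  have heq : (a :: l ++ [a]).reverse = a :: (l.reverse ++ [a]) := by simp
  rw [heq] at this
  exact this

/-- transfer a cycle along an injective relation-preserving map -/
lemma hasCycle_map {W : Type*} {F : W → W → Prop} (f : V → W) (hf : Function.Injective f)
    (hrel : ∀ x y, E x y → F (f x) (f y)) {k : ℕ} (h : HasCycle E k) : HasCycle F k := by
  obtain ⟨a, l, hlen, hnd, hc⟩ := h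
  refine ⟨f a, l.map f, by simpa using hlen, ?_, ?_⟩
  · have : (a :: l).map f = f a :: l.map f := rfl
    rw [← this]
    exact hnd.map hf
  · have : List.Chain E a (l ++ [a]) := hc
    rw [show (l.map f ++ [f a]) = (l ++ [a]).map f by simp]
    exact (List.isChain_map f (l := a :: (l ++ [a]))).mpr (List.IsChain.imp (fun a b h => hrel a b h) this)

/-- from relPow produce a chain list -/
lemma relPow_chain : ∀ (j : ℕ) (x y : V), relPow E j x y →
    ∃ l : List V, l.length = j ∧ List.Chain E x l ∧ (x :: l).getLast (by simp) = y := by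
  intro j
  induction j with
  | zero => intro x y h; exact ⟨[], rfl, List.Chain.nil, by simp [h.symm]⟩
  | succ n ih =>
    intro x y h
    obtain ⟨z, hz, hzy⟩ := h
    obtain ⟨l, hlen, hch, hlast⟩ := ih x z hz
    refine ⟨l ++ [y], by simp [hlen], ?_, by simp⟩
    have : List.Chain' E ((x :: l) ++ [y]) := by
      show List.IsChain E _; rw [List.isChain_append]
      refine ⟨hch, by simp, ?_⟩
      intro u hu v hv
      simp at hv
      subst hv
      rw [List.getLast?_eq_getLast (h := by simp)] at hu
      simp at hu
      have : u = z := by rw [← hu, hlast]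
      rwa [this]
    exact this

/-- closed relPow walk gives short cycle -/
lemma cycle_of_relPow {j : ℕ} {x : V} (hj : relPow E j x x) (hj1 : 1 ≤ j) :
    ∃ k, HasCycle E k ∧ k ≤ j := by
  obtain ⟨j', rfl⟩ : ∃ j', j = j' + 1 := ⟨j - 1, by omega⟩
  obtain ⟨z, hz, hzx⟩ := hj
  obtain ⟨l, hlen, hch, hlast⟩ := relPow_chain j' x z hz
  have hc : List.Chain E x (l ++ [x]) := by
    have : List.Chain' E ((x :: l) ++ [x]) := by
      show List.IsChain E _; rw [List.isChain_append]
      refine ⟨hch, by simp, ?_⟩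
      intro u hu v hv
      simp at hv; subst hv
      rw [List.getLast?_eq_getLast (h := by simp)] at hu
      simp at hu
      have : u = z := by rw [← hu, hlast]
      rwa [this]
    exact this
  obtain ⟨k, hk, hkle⟩ := cycle_of_closed_walk E l.length l x le_rfl hc
  exact ⟨k, hk, by omega⟩

end Aux2

section Aux3
variable {V : Type*} {E : V → V → Prop}

lemma relPow_iterate (f : V → V) (hf : ∀ x, E x (f x)) :
    ∀ (j : ℕ) (x : V), relPow E j x (f^[j] x) := by
  intro j
  induction j with
  | zero => intro x; rfl
  | succ n ih =>
    intro x
    exact ⟨f^[n] x, ih x, by rw [Function.iterate_succ_apply']; exact hf _⟩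

lemma exists_hasCycle [Fintype V] [Nonempty V] (h : ∀ x : V, ∃ y, E x y) :
    ∃ k, HasCycle E k := by
  classical
  choose f hf using h
  obtain ⟨x⟩ := ‹Nonempty V›
  have hcard : Fintype.card V < Fintype.card (Fin (Fintype.card V + 1)) := by simp
  obtain ⟨i, j, hne, heq⟩ :=
    Fintype.exists_ne_map_eq_of_card_lt (fun i : Fin (Fintype.card V + 1) => f^[i] x) hcard
  have key : ∀ i j : ℕ, i < j → f^[i] x = f^[j] x → ∃ k, HasCycle E k := by
    intro i j hij heq
    have hpow : relPow E (j - i) (f^[i] x) (f^[j] x) := by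
      have := relPow_iterate f hf (j - i) (f^[i] x)
      rwa [← Function.iterate_add_apply, Nat.sub_add_cancel (le_of_lt hij)] at this
    rw [← heq] at hpow
    obtain ⟨k, hk, _⟩ := cycle_of_relPow hpow (by omega)
    exact ⟨k, hk⟩
  have hne' : (i : ℕ) ≠ (j : ℕ) := fun h => hne (Fin.ext h)
  rcases lt_or_gt_of_ne hne' with h | h
  · exact key i j h heq
  · exact key j i h heq.symm

lemma isRelAuto_rFlip {f : V ≃ V} (h : IsRelAuto E f) : IsRelAuto (rFlip E) f :=
  fun x y => h y x

lemma pointSym_rFlip (h : PointSym E) : PointSym (rFlip E) := by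
  intro x y
  obtain ⟨f, hf, hfx⟩ := h x y
  exact ⟨f, isRelAuto_rFlip hf, hfx⟩

lemma relImage_auto {f : V ≃ V} (hf : IsRelAuto E f) (x : V) :
    relImage E (f x) = f '' relImage E x := by
  ext z
  constructor
  · intro hz
    refine ⟨f.symm z, ?_, by simp⟩
    have := (hf x (f.symm z)).mpr
    simp at this
    exact this hz
  · rintro ⟨w, hw, rfl⟩
    exact (hf x w).mp hw

lemma pointSym_outdeg_const (h : PointSym E) (x y : V) :
    (relImage E y).ncard = (relImage E x).ncard := by
  obtain ⟨f, hf, rfl⟩ := h x y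
  rw [relImage_auto hf, Set.ncard_image_of_injective _ f.injective]

open scoped Classical in
lemma ncard_relImage_eq_card_filter [Fintype V] (x : V) :
    (relImage E x).ncard = (Finset.univ.filter fun y => E x y).card := by
  rw [show relImage E x = {y | E x y} from rfl, Set.ncard_eq_toFinset_card']
  simp [Set.toFinset_setOf]

open scoped Classical in
lemma sum_out_eq_sum_in [Fintype V] :
    ∑ x : V, (relImage E x).ncard = ∑ x : V, (relImage (rFlip E) x).ncard := by
  simp only [ncard_relImage_eq_card_filter, Finset.card_filter]
  rw [Finset.sum_comm]
  rfl

lemma indeg_const_eq [Fintype V] [Nonempty V] (hsym : PointSym E) {r : ℕ}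
    (hdeg : ∀ x, (relImage E x).ncard = r) (x : V) :
    (relImage (rFlip E) x).ncard = r := by
  classical
  -- indegree is constant
  set c := (relImage (rFlip E) x).ncard with hc
  have hconst : ∀ y, (relImage (rFlip E) y).ncard = c :=
    fun y => pointSym_outdeg_const (pointSym_rFlip hsym) x y
  have hsum := sum_out_eq_sum_in (V := V) (E := E)
  rw [Finset.sum_congr rfl (fun y _ => hdeg y), Finset.sum_congr rfl (fun y _ => hconst y)] at hsum
  simp only [Finset.sum_const, Finset.card_univ, smul_eq_mul] at hsum
  have hpos : 0 < Fintype.card V := Fintype.card_pos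
  have : r = c := by
    have := Nat.eq_of_mul_eq_mul_left hpos hsum
    exact this
  omega

end Aux3

section Aux4
variable {V : Type*} [Fintype V] {E : V → V → Prop}

/-- closure -/
def relClos (E : V → V → Prop) (X : Set V) : Set V := X ∪ relSetImage E X

/-- outside -/
def relOmega (E : V → V → Prop) (X : Set V) : Set V := (relClos E X)ᶜ

lemma relSetImage_mono {X Y : Set V} (h : X ⊆ Y) : relSetImage E X ⊆ relSetImage E Y :=
  fun z ⟨x, hx, hxz⟩ => ⟨x, h hx, hxz⟩

lemma relSetImage_union {X Y : Set V} :
    relSetImage E (X ∪ Y) = relSetImage E X ∪ relSetImage E Y := by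
  ext z
  constructor
  · rintro ⟨x, hx | hx, hxz⟩
    · exact Or.inl ⟨x, hx, hxz⟩
    · exact Or.inr ⟨x, hx, hxz⟩
  · rintro (⟨x, hx, hxz⟩ | ⟨x, hx, hxz⟩)
    · exact ⟨x, Or.inl hx, hxz⟩
    · exact ⟨x, Or.inr hx, hxz⟩

lemma relClos_union {X Y : Set V} :
    relClos E (X ∪ Y) = relClos E X ∪ relClos E Y := by
  rw [relClos, relSetImage_union, relClos, relClos]
  ext z; constructor <;> intro h <;> simp at h ⊢ <;> tauto

lemma relClos_inter_subset {X Y : Set V} :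
    relClos E (X ∩ Y) ⊆ relClos E X ∩ relClos E Y := by
  rintro z (hz | hz)
  · exact ⟨Or.inl hz.1, Or.inl hz.2⟩
  · exact ⟨Or.inr (relSetImage_mono Set.inter_subset_left hz),
      Or.inr (relSetImage_mono Set.inter_subset_right hz)⟩

lemma ncard_relClos (X : Set V) :
    (relClos E X).ncard = X.ncard + (relBd E X).ncard := by
  rw [relClos, show X ∪ relSetImage E X = X ∪ (relSetImage E X \ X) by
    rw [Set.union_diff_self], Set.ncard_union_eq (Set.disjoint_sdiff_right)
      (Set.toFinite _) (Set.toFinite _)]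
  rfl

lemma ncard_clos_add_omega (X : Set V) :
    (relClos E X).ncard + (relOmega E X).ncard = Fintype.card V := by
  rw [relOmega, Set.ncard_add_ncard_compl _ (Set.toFinite _) (Set.toFinite _), Nat.card_eq_fintype_card]

lemma kappa_le_of_adm {X : Set V} (h : relAdm E X) : relKappa E ≤ (relBd E X).ncard :=
  Nat.sInf_le ⟨X, h, rfl⟩

lemma exists_fragment (h : ∃ X, relAdm E X) : ∃ F, IsFragment E F := by
  obtain ⟨X, hX⟩ := h
  have hne : {n | ∃ X : Set V, relAdm E X ∧ (relBd E X).ncard = n}.Nonempty :=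
    ⟨(relBd E X).ncard, X, hX, rfl⟩
  obtain ⟨F, hF, hcard⟩ := Nat.sInf_mem hne
  exact ⟨F, hF, hcard⟩

lemma atomCard_le_of_fragment {F : Set V} (h : IsFragment E F) : atomCard E ≤ F.ncard :=
  Nat.sInf_le ⟨F, h, rfl⟩

lemma exists_atom (h : ∃ X, relAdm E X) : ∃ A, IsRelAtom E A := by
  obtain ⟨F, hF⟩ := exists_fragment h
  have hne : {n | ∃ X : Set V, IsFragment E X ∧ X.ncard = n}.Nonempty := ⟨F.ncard, F, hF, rfl⟩
  obtain ⟨A, hA, hcard⟩ := Nat.sInf_mem hne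
  exact ⟨A, hA, hcard⟩

lemma adm_singleton (hloop : ∀ x, ¬ E x x) (v : V) : relAdm E {v} := by
  refine ⟨Set.finite_singleton v, Set.singleton_nonempty v, ?_⟩
  intro h
  have hv : v ∈ relSetImage E {v} := h ▸ Set.mem_univ v
  obtain ⟨x, hx, hxv⟩ := hv
  rw [Set.mem_singleton_iff] at hx
  exact hloop v (hx ▸ hxv)

lemma relBd_singleton (hloop : ∀ x, ¬ E x x) (v : V) :
    (relBd E {v}).ncard = (relImage E v).ncard := by
  congr 1
  rw [relBd]
  have h1 : relSetImage E {v} = relImage E v := by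
    ext z; constructor
    · rintro ⟨x, hx, hxz⟩; rw [Set.mem_singleton_iff] at hx; exact hx ▸ hxz
    · intro hz; exact ⟨v, rfl, hz⟩
  rw [h1]
  ext z
  simp only [Set.mem_diff, Set.mem_singleton_iff]
  constructor
  · exact fun h => h.1
  · intro hz
    refine ⟨hz, ?_⟩
    rintro rfl
    exact hloop z hz

/-- submodularity -/
lemma bd_submod (X Y : Set V) :
    (relBd E (X ∪ Y)).ncard + (relBd E (X ∩ Y)).ncard
      ≤ (relBd E X).ncard + (relBd E Y).ncard := by
  have h1 : (relClos E (X ∪ Y)).ncard + (relClos E (X ∩ Y)).ncard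
      ≤ (relClos E X).ncard + (relClos E Y).ncard := by
    rw [relClos_union]
    have h2 : (relClos E (X ∩ Y)).ncard ≤ (relClos E X ∩ relClos E Y).ncard :=
      Set.ncard_le_ncard relClos_inter_subset (Set.toFinite _)
    have h3 := Set.ncard_union_add_ncard_inter (relClos E X) (relClos E Y)
      (Set.toFinite _) (Set.toFinite _)
    omega
  have h4 := Set.ncard_union_add_ncard_inter X Y (Set.toFinite _) (Set.toFinite _)
  rw [ncard_relClos, ncard_relClos, ncard_relClos, ncard_relClos] at h1
  omega

end Aux4

set_option linter.unusedSectionVars false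

section Aux5
variable {V : Type*} [Fintype V] {E : V → V → Prop} {r : ℕ}

lemma univ_decomp (X : Set V) (z : V) :
    z ∈ X ∨ z ∈ relBd E X ∨ z ∈ relOmega E X := by
  by_cases h1 : z ∈ X
  · exact Or.inl h1
  by_cases h2 : z ∈ relSetImage E X
  · exact Or.inr (Or.inl ⟨h2, h1⟩)
  · exact Or.inr (Or.inr (by
      intro hc
      rcases hc with hc | hc
      · exact h1 hc
      · exact h2 hc))

/-- C3': if the boundary is smaller than the in-degree, the outside is nonempty -/
lemma omega_nonempty (hindeg : ∀ x, (relImage (rFlip E) x).ncard = r)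
    {X : Set V} (hadm : relAdm E X) (hlt : (relBd E X).ncard < r) :
    (relOmega E X).Nonempty := by
  by_contra h
  rw [Set.not_nonempty_iff_eq_empty] at h
  -- X ∪ N(X) = univ
  have huniv : relClos E X = Set.univ := by
    have := congrArg (·ᶜ) h
    simpa [relOmega] using this
  obtain ⟨y, hy⟩ : ∃ y, y ∉ relSetImage E X := by
    by_contra hc
    push_neg at hc
    exact hadm.2.2 (Set.eq_univ_of_forall hc)
  have hyX : y ∈ X := by
    have : y ∈ relClos E X := huniv ▸ Set.mem_univ y
    rcases this with h | h
    · exact h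
    · exact absurd h hy
  -- in-neighbours of y lie in the boundary
  have hsub : relImage (rFlip E) y ⊆ relBd E X := by
    intro z hz
    have hzX : z ∉ X := fun hzX => hy ⟨z, hzX, hz⟩
    have hzN : z ∈ relSetImage E X := by
      have : z ∈ relClos E X := huniv ▸ Set.mem_univ z
      rcases this with h | h
      · exact absurd h hzX
      · exact h
    exact ⟨hzN, hzX⟩
  have := Set.ncard_le_ncard hsub (Set.toFinite _)
  rw [hindeg y] at this
  omega

/-- C4 : in-boundary of the outside is inside the boundary -/
lemma bd_flip_omega_subset (X : Set V) :
    relBd (rFlip E) (relOmega E X) ⊆ relBd E X := by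
  rintro z ⟨⟨w, hw, hzw⟩, hz⟩
  -- hzw : rFlip E w z i.e. E z w, w ∈ Ω(X), z ∉ Ω(X)
  have hzX : z ∉ X := by
    intro hzX
    exact hw (Or.inr ⟨z, hzX, hzw⟩)
  rcases univ_decomp (E := E) X z with h | h | h
  · exact absurd h hzX
  · exact h
  · exact absurd h hz

lemma flip_image_omega_disj (X : Set V) :
    relSetImage (rFlip E) (relOmega E X) ∩ X = ∅ := by
  ext z
  simp only [Set.mem_inter_iff, Set.mem_empty_iff_false, iff_false, not_and]
  rintro ⟨w, hw, hzw⟩ hzX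
  exact hw (Or.inr ⟨z, hzX, hzw⟩)

lemma omega_flip_adm {X : Set V} (hX : X.Nonempty) (hΩ : (relOmega E X).Nonempty) :
    relAdm (rFlip E) (relOmega E X) := by
  refine ⟨Set.toFinite _, hΩ, ?_⟩
  intro hc
  obtain ⟨x, hx⟩ := hX
  have : x ∈ relSetImage (rFlip E) (relOmega E X) := hc ▸ Set.mem_univ x
  have := flip_image_omega_disj (E := E) X
  rw [Set.eq_empty_iff_forall_notMem] at this
  exact this x ⟨‹_›, hx⟩

lemma kappa_flip_le (hindeg : ∀ x, (relImage (rFlip E) x).ncard = r)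
    (hadm_ex : ∃ X, relAdm E X) (hlt : relKappa E < r) :
    relKappa (rFlip E) ≤ relKappa E := by
  obtain ⟨F, hFadm, hFcard⟩ := exists_fragment hadm_ex
  have hΩ : (relOmega E F).Nonempty := omega_nonempty hindeg hFadm (hFcard ▸ hlt)
  have hadm : relAdm (rFlip E) (relOmega E F) := omega_flip_adm hFadm.2.1 hΩ
  calc relKappa (rFlip E) ≤ (relBd (rFlip E) (relOmega E F)).ncard := kappa_le_of_adm hadm
    _ ≤ (relBd E F).ncard := Set.ncard_le_ncard (bd_flip_omega_subset F) (Set.toFinite _)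
    _ = relKappa E := hFcard

end Aux5

section Aux6
variable {V : Type*} [Fintype V] {E : V → V → Prop} {r : ℕ}

lemma relSetImage_image_auto {f : V ≃ V} (hf : IsRelAuto E f) (X : Set V) :
    relSetImage E (f '' X) = f '' relSetImage E X := by
  ext z
  constructor
  · rintro ⟨w, ⟨x, hx, rfl⟩, hxz⟩
    refine ⟨f.symm z, ⟨x, hx, ?_⟩, by simp⟩
    have := (hf x (f.symm z)).mpr
    simp at this
    exact this hxz
  · rintro ⟨w, ⟨x, hx, hxw⟩, rfl⟩
    exact ⟨f x, ⟨x, hx, rfl⟩, (hf x w).mp hxw⟩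

lemma relBd_image_auto {f : V ≃ V} (hf : IsRelAuto E f) (X : Set V) :
    relBd E (f '' X) = f '' relBd E X := by
  rw [relBd, relBd, relSetImage_image_auto hf, ← Set.image_diff f.injective]

lemma relAdm_image_auto {f : V ≃ V} (hf : IsRelAuto E f) {X : Set V} (h : relAdm E X) :
    relAdm E (f '' X) := by
  refine ⟨Set.toFinite _, h.2.1.image f, ?_⟩
  rw [relSetImage_image_auto hf]
  intro hc
  apply h.2.2
  have := congrArg (f.symm '' ·) hc
  simpa [Set.image_image] using this

lemma isFragment_image_auto {f : V ≃ V} (hf : IsRelAuto E f) {X : Set V}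
    (h : IsFragment E X) : IsFragment E (f '' X) := by
  refine ⟨relAdm_image_auto hf h.1, ?_⟩
  rw [relBd_image_auto hf, Set.ncard_image_of_injective _ f.injective]
  exact h.2

lemma isRelAtom_image_auto {f : V ≃ V} (hf : IsRelAuto E f) {X : Set V}
    (h : IsRelAtom E X) : IsRelAtom E (f '' X) := by
  refine ⟨isFragment_image_auto hf h.1, ?_⟩
  rw [Set.ncard_image_of_injective _ f.injective]
  exact h.2

/-- the key lemma: an atom meeting a fragment is contained in it -/
lemma atom_subset_of_inter
    (hindeg : ∀ x, (relImage (rFlip E) x).ncard = r)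
    (hlt : relKappa E < r)
    (hkflip : relKappa (rFlip E) = relKappa E)
    (hale : atomCard E ≤ atomCard (rFlip E))
    {A F : Set V} (hA : IsRelAtom E A) (hF : IsFragment E F)
    (hAF : (A ∩ F).Nonempty) : A ⊆ F := by
  set κ := relKappa E with hκ
  have hAadm : relAdm E A := hA.1.1
  have hFadm : relAdm E F
    := hF.1
  have hIadm : relAdm E (A ∩ F) := by
    refine ⟨Set.toFinite _, hAF, ?_⟩
    intro hc
    apply hAadm.2.2
    apply Set.eq_univ_of_univ_subset
    rw [← hc]
    exact relSetImage_mono Set.inter_subset_left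
  have hIbd : κ ≤ (relBd E (A ∩ F)).ncard := kappa_le_of_adm hIadm
  by_cases hU : relSetImage E (A ∪ F) = Set.univ
  · -- impossible case
    exfalso
    have hclosU : relClos E A ∪ relClos E F = Set.univ := by
      apply Set.eq_univ_of_univ_subset
      rw [← hU, ← relClos_union]
      exact Set.subset_union_right
    have h1 := Set.ncard_union_add_ncard_inter (relClos E A) (relClos E F)
      (Set.toFinite _) (Set.toFinite _)
    rw [hclosU, Set.ncard_univ, Nat.card_eq_fintype_card] at h1
    have h2 : (relClos E (A ∩ F)).ncard ≤ (relClos E A ∩ relClos E F).ncard :=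
      Set.ncard_le_ncard relClos_inter_subset (Set.toFinite _)
    have h3 : (relClos E (A ∩ F)).ncard = (A ∩ F).ncard + (relBd E (A ∩ F)).ncard :=
      ncard_relClos _
    have h4 : (relClos E A).ncard = A.ncard + κ := by
      rw [ncard_relClos, hA.1.2]
    have h5 : (relClos E F).ncard = F.ncard + κ := by
      rw [ncard_relClos, hF.2]
    have h6 := ncard_clos_add_omega (E := E) F
    have ht : 1 ≤ (A ∩ F).ncard := (Set.ncard_pos (Set.toFinite _)).mpr hAF
    -- Ω F is a fragment of the reverse graph
    have hΩne : (relOmega E F).Nonempty := omega_nonempty hindeg hFadm (hF.2 ▸ hlt)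
    have hΩadm : relAdm (rFlip E) (relOmega E F) := omega_flip_adm hFadm.2.1 hΩne
    have hΩbd_le : (relBd (rFlip E) (relOmega E F)).ncard ≤ κ := by
      calc (relBd (rFlip E) (relOmega E F)).ncard
          ≤ (relBd E F).ncard := Set.ncard_le_ncard (bd_flip_omega_subset F) (Set.toFinite _)
        _ = κ := hF.2
    have hΩbd_ge : relKappa (rFlip E) ≤ (relBd (rFlip E) (relOmega E F)).ncard :=
      kappa_le_of_adm hΩadm
    have hΩfrag : IsFragment (rFlip E) (relOmega E F) :=
      ⟨hΩadm, by omega⟩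
    have hωge : atomCard (rFlip E) ≤ (relOmega E F).ncard := atomCard_le_of_fragment hΩfrag
    have haA : A.ncard = atomCard E := hA.2
    -- combine
    omega
  · have hUadm : relAdm E (A ∪ F) :=
      ⟨Set.toFinite _, hAadm.2.1.mono Set.subset_union_left, hU⟩
    have hUbd : κ ≤ (relBd E (A ∪ F)).ncard := kappa_le_of_adm hUadm
    have hsub := bd_submod (E := E) A F
    rw [hA.1.2, hF.2] at hsub
    have hIfrag : IsFragment E (A ∩ F) := ⟨hIadm, by omega⟩
    have hIcard : atomCard E ≤ (A ∩ F).ncard := atomCard_le_of_fragment hIfrag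
    have heq : A ∩ F = A := Set.eq_of_subset_of_ncard_le Set.inter_subset_left
      (by rw [hA.2]; exact hIcard) (Set.toFinite _)
    rw [← heq]
    exact Set.inter_subset_right

end Aux6

section Aux7
variable {V : Type*} [Fintype V] {E : V → V → Prop} {r : ℕ}

/-- induced relation on a subset -/
def indRel (E : V → V → Prop) (A : Set V) : ↥A → ↥A → Prop := fun x y => E x.1 y.1

lemma block_property
    (hindeg : ∀ x, (relImage (rFlip E) x).ncard = r)
    (hlt : relKappa E < r)
    (hkflip : relKappa (rFlip E) = relKappa E)
    (hale : atomCard E ≤ atomCard (rFlip E))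
    {A : Set V} (hA : IsRelAtom E A) {f : V ≃ V} (hf : IsRelAuto E f)
    (hmeet : ((f '' A) ∩ A).Nonempty) : f '' A = A := by
  have hA' : IsRelAtom E (f '' A) := isRelAtom_image_auto hf hA
  have hsub : f '' A ⊆ A := atom_subset_of_inter hindeg hlt hkflip hale hA' hA.1 hmeet
  apply Set.eq_of_subset_of_ncard_le hsub ?_ (Set.toFinite _)
  rw [Set.ncard_image_of_injective _ f.injective]

lemma pointSym_induced
    (hsym : PointSym E)
    (hindeg : ∀ x, (relImage (rFlip E) x).ncard = r)
    (hlt : relKappa E < r)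
    (hkflip : relKappa (rFlip E) = relKappa E)
    (hale : atomCard E ≤ atomCard (rFlip E))
    {A : Set V} (hA : IsRelAtom E A) : PointSym (indRel E A) := by
  rintro ⟨x, hx⟩ ⟨y, hy⟩
  obtain ⟨f, hf, hfx⟩ := hsym x y
  have hblock : f '' A = A := block_property hindeg hlt hkflip hale hA hf
    ⟨y, ⟨x, hx, hfx⟩, hy⟩
  have hmem : ∀ z : ↥A, f z.1 ∈ A := by
    intro z
    have h : f z.1 ∈ f '' A := ⟨z.1, z.2, rfl⟩
    rwa [hblock] at h
  have hmem' : ∀ z : ↥A, f.symm z.1 ∈ A := by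
    intro z
    have hsymm : f.symm '' A = A := by
      have := congrArg (f.symm '' ·) hblock
      simpa [Set.image_image] using this.symm
    have h : f.symm z.1 ∈ f.symm '' A := ⟨z.1, z.2, rfl⟩
    rwa [hsymm] at h
  refine ⟨⟨fun z => ⟨f z.1, hmem z⟩, fun z => ⟨f.symm z.1, hmem' z⟩, ?_, ?_⟩, ?_, ?_⟩
  · intro z; ext; simp
  · intro z; ext; simp
  · intro z w
    exact hf z.1 w.1
  · exact Subtype.ext hfx

lemma ncard_relImage_induced {A : Set V} (x : ↥A) :
    (relImage (indRel E A) x).ncard = (relImage E x.1 ∩ A).ncard := by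
  have himg : Subtype.val '' (relImage (indRel E A) x) = relImage E x.1 ∩ A := by
    ext z
    constructor
    · rintro ⟨⟨w, hw⟩, hrel, rfl⟩
      exact ⟨hrel, hw⟩
    · rintro ⟨h1, h2⟩
      exact ⟨⟨z, h2⟩, h1, rfl⟩
  rw [← himg, Set.ncard_image_of_injective _ Subtype.val_injective]

lemma sum_card_filter_comm (s t : Finset V) (R : V → V → Prop) [DecidableRel R] :
    ∑ x ∈ s, (t.filter (fun y => R x y)).card = ∑ y ∈ t, (s.filter (fun x => R x y)).card := by
  simp only [Finset.card_filter]
  rw [Finset.sum_comm]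

/-- external edge counting : |A| * (r - r_A) ≤ κ * r -/
lemma external_count
    (hdeg : ∀ x, (relImage E x).ncard = r)
    (hindeg : ∀ x, (relImage (rFlip E) x).ncard = r)
    {A : Set V} {rA : ℕ}
    (hA_int : ∀ x ∈ A, (relImage E x ∩ A).ncard = rA) :
    A.ncard * (r - rA) ≤ (relBd E A).ncard * r := by
  classical
  set Af := A.toFinset with hAf
  set Bf := (relBd E A).toFinset with hBf
  have hx_ext : ∀ x ∈ A, (Bf.filter (fun y => E x y)).card = r - rA := by
    intro x hx
    have hset : (relBd E A) ∩ {y | E x y} = relImage E x \ A := by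
      ext z
      simp only [Set.mem_inter_iff, relBd, Set.mem_diff, Set.mem_setOf_eq]
      constructor
      · rintro ⟨⟨h1, h2⟩, h3⟩; exact ⟨h3, h2⟩
      · rintro ⟨h1, h2⟩; exact ⟨⟨⟨x, hx, h1⟩, h2⟩, h1⟩
    have hcardset : (relImage E x \ A).ncard = r - rA := by
      have hsplit : (relImage E x ∩ A).ncard + (relImage E x \ A).ncard
          = (relImage E x).ncard := by
        rw [← Set.ncard_union_eq (Set.disjoint_of_subset_left Set.inter_subset_right
          Set.disjoint_sdiff_right) (Set.toFinite _) (Set.toFinite _),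
          Set.inter_union_diff]
      rw [hA_int x hx, hdeg x] at hsplit
      omega
    have : (Bf.filter (fun y => E x y)) = (relImage E x \ A).toFinset := by
      ext z
      simp only [Finset.mem_filter, hBf, Set.mem_toFinset]
      rw [← hset]
      simp only [Set.mem_inter_iff, Set.mem_setOf_eq]
    rw [this, ← Set.ncard_eq_toFinset_card']
    exact hcardset
  have hy_in : ∀ y, (Af.filter (fun x => E x y)).card ≤ r := by
    intro y
    have hsub : (Af.filter (fun x => E x y)) ⊆ Finset.univ.filter (fun x => E x y) := by
      intro z hz
      simp only [Finset.mem_filter, Finset.mem_univ, true_and]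
      exact (Finset.mem_filter.mp hz).2
    calc (Af.filter (fun x => E x y)).card ≤ (Finset.univ.filter (fun x => E x y)).card :=
          Finset.card_le_card hsub
      _ = (relImage (rFlip E) y).ncard := by
          rw [ncard_relImage_eq_card_filter (E := rFlip E) y]
          congr 1
      _ = r := hindeg y
  have hswap := sum_card_filter_comm Af Bf E
  have hlhs : ∑ x ∈ Af, (Bf.filter (fun y => E x y)).card = A.ncard * (r - rA) := by
    rw [Finset.sum_congr rfl (fun x hx => hx_ext x (by rwa [hAf, Set.mem_toFinset] at hx))]
    rw [Finset.sum_const, smul_eq_mul, hAf, ← Set.ncard_eq_toFinset_card']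
  have hrhs : ∑ y ∈ Bf, (Af.filter (fun x => E x y)).card ≤ (relBd E A).ncard * r := by
    calc ∑ y ∈ Bf, (Af.filter (fun x => E x y)).card ≤ ∑ _y ∈ Bf, r :=
          Finset.sum_le_sum (fun y _ => hy_in y)
      _ = (relBd E A).ncard * r := by
          rw [Finset.sum_const, smul_eq_mul, hBf, ← Set.ncard_eq_toFinset_card']
  omega

end Aux7

section Aux8
variable {V : Type*} [Fintype V] {E : V → V → Prop} {r g : ℕ}

def rBall (E : V → V → Prop) (v : V) (i : ℕ) : Set V := {x | ∃ j ≤ i, relPow E j v x}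

lemma rBall_zero (v : V) : rBall E v 0 = {v} := by
  ext x
  simp only [rBall, Set.mem_setOf_eq, Set.mem_singleton_iff]
  constructor
  · rintro ⟨j, hj, hx⟩
    have : j = 0 := by omega
    subst this
    exact hx.symm
  · rintro rfl
    exact ⟨0, le_rfl, rfl⟩

lemma rBall_succ (v : V) (i : ℕ) : rBall E v (i+1) = relClos E (rBall E v i) := by
  ext x
  constructor
  · rintro ⟨j, hj, hx⟩
    rcases Nat.lt_or_ge j (i+1) with h | h
    · exact Or.inl ⟨j, by omega, hx⟩
    · have : j = i + 1 := by omega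
      subst this
      obtain ⟨z, hz, hzx⟩ := hx
      exact Or.inr ⟨z, ⟨i, le_rfl, hz⟩, hzx⟩
  · rintro (⟨j, hj, hx⟩ | ⟨z, ⟨j, hj, hz⟩, hzx⟩)
    · exact ⟨j, by omega, hx⟩
    · exact ⟨j + 1, by omega, z, hz, hzx⟩

lemma mem_rBall_self (v : V) (i : ℕ) : v ∈ rBall E v i := ⟨0, Nat.zero_le _, rfl⟩

lemma no_back_edge (hgmin : ∀ k, HasCycle E k → g ≤ k) (v : V) {i : ℕ}
    (hi : i + 2 ≤ g) : v ∉ relSetImage E (rBall E v i) := by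
  rintro ⟨x, ⟨j, hj, hx⟩, hxv⟩
  have hpow : relPow E (j + 1) v v := ⟨x, hx, hxv⟩
  obtain ⟨k, hk, hkle⟩ := cycle_of_relPow hpow (by omega)
  have := hgmin k hk
  omega

lemma rBall_adm (hgmin : ∀ k, HasCycle E k → g ≤ k) (v : V) {i : ℕ}
    (hi : i + 2 ≤ g) : relAdm E (rBall E v i) := by
  refine ⟨Set.toFinite _, ⟨v, mem_rBall_self v i⟩, ?_⟩
  intro hc
  exact no_back_edge hgmin v hi (hc ▸ Set.mem_univ v)

lemma ball_bound (hloop : ∀ x, ¬ E x x) (hdeg : ∀ x, (relImage E x).ncard = r)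
    (hgmin : ∀ k, HasCycle E k → g ≤ k) (hg2 : 2 ≤ g) (v : V) :
    1 + r + relKappa E * (g - 2) ≤ Fintype.card V := by
  set κ := relKappa E with hκ
  have key : ∀ m, m + 2 ≤ g → 1 + r + κ * m ≤ (rBall E v (m+1)).ncard := by
    intro m
    induction m with
    | zero =>
      intro _
      rw [rBall_succ, show (rBall E v 0 : Set V) = {v} from rBall_zero v,
        ncard_relClos, relBd_singleton hloop v, hdeg v]
      simp
    | succ m ih =>
      intro hm
      have h1 := ih (by omega)
      have hadm : relAdm E (rBall E v (m+1)) := rBall_adm hgmin v (by omega)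
      have h2 : κ ≤ (relBd E (rBall E v (m+1))).ncard := kappa_le_of_adm hadm
      rw [rBall_succ (i := m+1), ncard_relClos]
      calc 1 + r + κ * (m+1) = (1 + r + κ * m) + κ := by ring
        _ ≤ (rBall E v (m+1)).ncard + (relBd E (rBall E v (m+1))).ncard := by omega
  have hfin : 1 + r + κ * (g - 2) ≤ (rBall E v (g - 1)).ncard := by
    have := key (g - 2) (by omega)
    have hg1 : g - 2 + 1 = g - 1 := by omega
    rwa [hg1] at this
  calc 1 + r + κ * (g-2) ≤ (rBall E v (g-1)).ncard := hfin
    _ ≤ (Set.univ : Set V).ncard := Set.ncard_le_ncard (Set.subset_univ _) (Set.toFinite _)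
    _ = Fintype.card V := by rw [Set.ncard_univ, Nat.card_eq_fintype_card]

end Aux8

section Arith

lemma quad_ineq (r G rA : ℤ) (h1 : 1 ≤ rA) (h2 : 2*rA ≤ r) (h3 : r ≤ rA*G) :
    r*(r*G - r + 1) ≤ (rA*G+2)*(r-rA)*G := by
  have e1 : 0 ≤ rA*G - r := by linarith
  have e2 : 0 ≤ r - 2*rA := by linarith
  have e3 : 0 ≤ rA - 1 := by linarith
  have e4 : 2 ≤ G := by nlinarith
  nlinarith [mul_nonneg e1 e2, mul_nonneg (mul_nonneg e1 e2) e1,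
    mul_nonneg (mul_nonneg e1 e2) e3, mul_nonneg e1 e3, mul_nonneg e2 e3,
    mul_nonneg (mul_nonneg e1 e1) e2, mul_nonneg (mul_nonneg e2 e2) e1,
    mul_nonneg e1 (by linarith : (0:ℤ) ≤ G - 2), mul_nonneg e2 (by linarith : (0:ℤ) ≤ G - 2),
    mul_nonneg (mul_nonneg e1 e2) (by linarith : (0:ℤ) ≤ G - 2)]

lemma final_arith {n a r G κ rA : ℕ} (hr : 1 ≤ r) (hκr : κ < r) (hrA1 : 1 ≤ rA)
    (hrAr : rA ≤ r) (hκrA : r ≤ κ + rA) (ha : rA * G + 2 ≤ a)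
    (hcnt : a * (r - rA) ≤ κ * r) (hn1 : 1 + r + κ * G ≤ n) (hn2 : 2*a + κ ≤ n) :
    r * G + 2 ≤ n := by
  rcases Nat.lt_or_ge (2*rA) (r+1) with hhalf | hhalf
  · -- 2 * rA ≤ r; handle two subcases
    rcases Nat.lt_or_ge (rA * G) r with hsmall | hbig
    · -- rA*G ≤ r - 1 : use κ ≥ r - rA
      have hκge : r - rA ≤ κ := by omega
      have hG : r * G ≤ rA * G + (r - rA) * G := by
        rw [← Nat.add_mul]
        apply Nat.mul_le_mul_right
        omega
      have : (r - rA) * G ≤ κ * G := Nat.mul_le_mul_right _ hκge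
      -- rA * G ≤ r - 1
      omega
    · -- r ≤ rA * G : quadratic case
      have h2rA : 2 * rA ≤ r := by omega
      have hq := quad_ineq (r : ℤ) (G : ℤ) (rA : ℤ) (by exact_mod_cast hrA1)
        (by exact_mod_cast h2rA) (by exact_mod_cast hbig)
      -- κ * r * G ≥ a * (r - rA) * G ≥ (rA*G+2)*(r-rA)*G ≥ r*(r*G - r + 1)
      have hstep : (rA*G+2) * (r-rA) ≤ κ * r := le_trans (Nat.mul_le_mul_right _ ha) hcnt
      have hZ : ((rA:ℤ)*G+2) * ((r:ℤ)-rA) ≤ (κ:ℤ) * r := by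
        have : ((rA*G+2) * (r-rA) : ℕ) = (((rA:ℤ)*G+2) * ((r:ℤ)-rA)) := by
          push_cast [Nat.cast_sub hrAr]
          ring
        rw [← this]
        exact_mod_cast hstep
      have hfinZ : (r:ℤ)*((r:ℤ)*G - r + 1) ≤ (κ:ℤ) * r * G := by
        calc (r:ℤ)*((r:ℤ)*G - r + 1) ≤ ((rA:ℤ)*G+2)*((r:ℤ)-rA)*G := hq
          _ ≤ (κ:ℤ) * r * G := by
              apply mul_le_mul_of_nonneg_right hZ (by positivity)
      -- conclude κ*G ≥ r*G - r + 1
      have hκG : (r:ℤ)*G - r + 1 ≤ (κ:ℤ) * G := by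
        have hrpos : (0:ℤ) < r := by exact_mod_cast hr
        nlinarith
      have : r * G + 2 ≤ 1 + r + κ * G := by
        have : (r:ℤ) * G + 2 ≤ 1 + r + κ * G := by linarith
        exact_mod_cast this
      omega
  ·
    have h2 : r ≤ 2 * rA := by omega
    have : r * G ≤ 2 * (rA * G) := by
      calc r * G ≤ (2 * rA) * G := Nat.mul_le_mul_right _ h2
        _ = 2 * (rA * G) := by ring
    omega

end Arith

section Core
universe u

/-- The main inductive step, assuming the atom of `E` is no bigger than that of the reverse. -/
lemma core_step (N : ℕ)
    (IH : ∀ (W : Type u) [Fintype W] (E' : W → W → Prop) (r' g' : ℕ),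
      Fintype.card W ≤ N → 1 ≤ r' → (∀ x, ¬ E' x x) → PointSym E' →
      (∀ x, (relImage E' x).ncard = r') → HasCycle E' g' →
      (∀ k, HasCycle E' k → g' ≤ k) → r' * (g' - 2) + 2 ≤ Fintype.card W)
    (V : Type u) [Fintype V] (E : V → V → Prop) (r g : ℕ)
    (hcard : Fintype.card V ≤ N + 1) (hr : 1 ≤ r) (hloop : ∀ x, ¬ E x x)
    (hsym : PointSym E) (hdeg : ∀ x, (relImage E x).ncard = r)
    (hg : HasCycle E g) (hgmin : ∀ k, HasCycle E k → g ≤ k)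
    (hale : atomCard E ≤ atomCard (rFlip E)) :
    r * (g - 2) + 2 ≤ Fintype.card V := by
  classical
  obtain ⟨v0, -⟩ := id hg
  haveI : Nonempty V := ⟨v0⟩
  have hg2 : 2 ≤ g := hasCycle_two_le hloop hg
  set n := Fintype.card V with hn
  set κ := relKappa E with hκ
  have hindeg : ∀ x, (relImage (rFlip E) x).ncard = r := indeg_const_eq hsym hdeg
  have hball : 1 + r + κ * (g - 2) ≤ n := ball_bound hloop hdeg hgmin hg2 v0
  rcases Nat.lt_or_ge κ r with hκr | hκr
  swap
  · -- κ ≥ r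
    have : r * (g-2) ≤ κ * (g-2) := Nat.mul_le_mul_right _ hκr
    omega
  -- κ < r : atom analysis
  have hadm_ex : ∃ X, relAdm E X := ⟨{v0}, adm_singleton hloop v0⟩
  have hkflip : relKappa (rFlip E) = relKappa E := by
    have h1 : relKappa (rFlip E) ≤ relKappa E := kappa_flip_le hindeg hadm_ex hκr
    have h2 : relKappa E ≤ relKappa (rFlip E) := by
      have := kappa_flip_le (E := rFlip E) (r := r) hdeg
        ⟨{v0}, adm_singleton (E := rFlip E) (fun x hx => hloop x hx) v0⟩ (by omega)
      exact this
    omega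
  obtain ⟨A, hA⟩ := exists_atom hadm_ex
  have hAadm : relAdm E A := hA.1.1
  have hAbd : (relBd E A).ncard = κ := hA.1.2
  -- induced graph structure
  have hsymA : PointSym (indRel E A) := pointSym_induced hsym hindeg hκr hkflip hale hA
  obtain ⟨x0, hx0⟩ := hAadm.2.1
  set rA := (relImage (indRel E A) (⟨x0, hx0⟩ : ↥A)).ncard with hrA
  have hdegA : ∀ x : ↥A, (relImage (indRel E A) x).ncard = rA :=
    fun x => pointSym_outdeg_const hsymA ⟨x0, hx0⟩ x
  have hA_int : ∀ x (hx : x ∈ A), (relImage E x ∩ A).ncard = rA := by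
    intro x hx
    rw [← ncard_relImage_induced (E := E) ⟨x, hx⟩]
    exact hdegA ⟨x, hx⟩
  -- rA bounds
  have hsplit : ∀ x (hx : x ∈ A), (relImage E x ∩ A).ncard + (relImage E x \ A).ncard = r := by
    intro x hx
    rw [← Set.ncard_union_eq (Set.disjoint_of_subset_left Set.inter_subset_right
      Set.disjoint_sdiff_right) (Set.toFinite _) (Set.toFinite _), Set.inter_union_diff]
    exact hdeg x
  have hext_bd : ∀ x (hx : x ∈ A), (relImage E x \ A).ncard ≤ κ := by
    intro x hx
    have hsub : relImage E x \ A ⊆ relBd E A := by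
      rintro z ⟨h1, h2⟩
      exact ⟨⟨x, hx, h1⟩, h2⟩
    calc (relImage E x \ A).ncard ≤ (relBd E A).ncard :=
        Set.ncard_le_ncard hsub (Set.toFinite _)
      _ = κ := hAbd
  have hκrA : r ≤ κ + rA := by
    have h1 := hsplit x0 hx0
    have h2 := hext_bd x0 hx0
    have h3 := hA_int x0 hx0
    omega
  have hrAr : rA ≤ r := by
    have h1 := hsplit x0 hx0
    have h3 := hA_int x0 hx0
    omega
  have hrA1 : 1 ≤ rA := by omega
  -- cycle in the induced graph
  letI : Fintype ↥A := (Set.toFinite A).fintype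
  haveI : Nonempty ↥A := ⟨⟨x0, hx0⟩⟩
  have hsucc : ∀ x : ↥A, ∃ y, indRel E A x y := by
    intro x
    have : 0 < (relImage (indRel E A) x).ncard := by rw [hdegA x]; omega
    obtain ⟨y, hy⟩ := (Set.ncard_pos (Set.toFinite _)).mp this
    exact ⟨y, hy⟩
  have hexC : ∃ k, HasCycle (indRel E A) k := exists_hasCycle hsucc
  set gA := Nat.find hexC with hgA
  have hgAcyc : HasCycle (indRel E A) gA := Nat.find_spec hexC
  have hgAmin : ∀ k, HasCycle (indRel E A) k → gA ≤ k := fun k hk => Nat.find_min' hexC hk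
  have hggA : g ≤ gA := by
    apply hgmin
    exact hasCycle_map Subtype.val Subtype.val_injective (fun x y h => h) hgAcyc
  have hloopA : ∀ x : ↥A, ¬ indRel E A x x := fun x h => hloop x.1 h
  -- a < n
  have hΩne : (relOmega E A).Nonempty := omega_nonempty hindeg hAadm (by omega)
  obtain ⟨w, hw⟩ := hΩne
  have haltn : A.ncard < n := by
    have hss : A ⊂ Set.univ := by
      rw [Set.ssubset_univ_iff]
      intro hc
      exact hw (Or.inl (hc ▸ Set.mem_univ w))
    calc A.ncard < (Set.univ : Set V).ncard := Set.ncard_lt_ncard hss (Set.toFinite _)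
      _ = n := by rw [Set.ncard_univ, Nat.card_eq_fintype_card]
  have hcardA : Fintype.card ↥A = A.ncard := by
    rw [← Nat.card_eq_fintype_card, Nat.card_coe_set_eq]
  -- apply induction hypothesis to induced graph
  have hIH := IH (↥A) (indRel E A) rA gA (by omega) hrA1 hloopA hsymA hdegA hgAcyc hgAmin
  rw [hcardA] at hIH
  have haA : rA * (g - 2) + 2 ≤ A.ncard := by
    have : rA * (g-2) ≤ rA * (gA-2) := Nat.mul_le_mul_left _ (by omega)
    omega
  -- Ω(A) is a reverse fragment, so atomCard (rFlip E) ≤ ω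
  have hΩadm : relAdm (rFlip E) (relOmega E A) := omega_flip_adm hAadm.2.1 ⟨w, hw⟩
  have hΩbd_le : (relBd (rFlip E) (relOmega E A)).ncard ≤ κ := by
    calc (relBd (rFlip E) (relOmega E A)).ncard ≤ (relBd E A).ncard :=
        Set.ncard_le_ncard (bd_flip_omega_subset A) (Set.toFinite _)
      _ = κ := hAbd
  have hΩbd_ge : relKappa (rFlip E) ≤ (relBd (rFlip E) (relOmega E A)).ncard :=
    kappa_le_of_adm hΩadm
  have hΩfrag : IsFragment (rFlip E) (relOmega E A) := ⟨hΩadm, by omega⟩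
  have hωge : atomCard (rFlip E) ≤ (relOmega E A).ncard := atomCard_le_of_fragment hΩfrag
  have haω : A.ncard ≤ (relOmega E A).ncard := le_trans (hA.2 ▸ hale) hωge
  -- n = a + κ + ω
  have hdecomp : (relClos E A).ncard + (relOmega E A).ncard = n := ncard_clos_add_omega A
  have hclosA : (relClos E A).ncard = A.ncard + κ := by rw [ncard_relClos, hAbd]
  have hn2 : 2 * A.ncard + κ ≤ n := by omega
  -- external counting
  have hcnt : A.ncard * (r - rA) ≤ κ * r := by
    have := external_count hdeg hindeg (A := A) (rA := rA) (fun x hx => hA_int x hx)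
    rwa [hAbd] at this
  exact final_arith hr hκr hrA1 hrAr hκrA haA hcnt hball hn2

/-- main induction -/
lemma core : ∀ (N : ℕ) (V : Type u) [Fintype V] (E : V → V → Prop) (r g : ℕ),
    Fintype.card V ≤ N → 1 ≤ r → (∀ x, ¬ E x x) → PointSym E →
    (∀ x, (relImage E x).ncard = r) → HasCycle E g →
    (∀ k, HasCycle E k → g ≤ k) → r * (g - 2) + 2 ≤ Fintype.card V := by
  intro N
  induction N with
  | zero =>
    intro V _ E r g hcard _ _ _ _ hg _
    obtain ⟨a, -⟩ := hg
    have : 0 < Fintype.card V := Fintype.card_pos_iff.mpr ⟨a⟩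
    omega
  | succ N ih =>
    intro V _ E r g hcard hr hloop hsym hdeg hg hgmin
    obtain ⟨v0, -⟩ := id hg
    haveI : Nonempty V := ⟨v0⟩
    rcases le_or_gt (atomCard E) (atomCard (rFlip E)) with hale | hgt
    · exact core_step N ih V E r g hcard hr hloop hsym hdeg hg hgmin hale
    · -- apply to the reverse graph
      have hdeg' : ∀ x, (relImage (rFlip E) x).ncard = r := indeg_const_eq hsym hdeg
      have hloop' : ∀ x, ¬ rFlip E x x := fun x h => hloop x h
      have hsym' : PointSym (rFlip E) := pointSym_rFlip hsym
      have hg' : HasCycle (rFlip E) g := hasCycle_rFlip hg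
      have hgmin' : ∀ k, HasCycle (rFlip E) k → g ≤ k := by
        intro k hk
        exact hgmin k (hasCycle_rFlip (E := rFlip E) hk)
      have hale' : atomCard (rFlip E) ≤ atomCard (rFlip (rFlip E)) := le_of_lt hgt
      exact core_step N ih V (rFlip E) r g hcard hr hloop' hsym' hdeg' hg' hgmin' hale'

end Core


theorem stmt_18 {V : Type*} [Fintype V] (E : V → V → Prop) (r : ℕ) (hr : 1 ≤ r)
    (hloop : ∀ x, ¬ E x x) (hsym : PointSym E)
    (hdeg : ∀ x, (relImage E x).ncard = r) (g : ℕ)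
    (hg : HasCycle E g) (hgmin : ∀ k, HasCycle E k → g ≤ k) :
    g ≤ ⌈((Fintype.card V : ℚ) - 1) / (r : ℚ)⌉₊ + 1 := by
  have hg2 : 2 ≤ g := hasCycle_two_le hloop hg
  have hn := core (Fintype.card V) V E r g le_rfl hr hloop hsym hdeg hg hgmin
  obtain ⟨m, rfl⟩ : ∃ m, g = m + 2 := ⟨g - 2, by omega⟩
  have hm2 : m + 2 - 2 = m := by omega
  rw [hm2] at hn
  have hrQ : (0:ℚ) < r := by
    have : (1:ℚ) ≤ r := by exact_mod_cast hr
    linarith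
  have hlt : (m : ℚ) < ((Fintype.card V : ℚ) - 1) / r := by
    rw [lt_div_iff₀ hrQ]
    have hn' : (r * m + 2 : ℚ) ≤ (Fintype.card V : ℚ) := by exact_mod_cast hn
    linarith
  have := Nat.lt_ceil.mpr hlt
  omega
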